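/- Let n > 3 be an odd integer with prime factorization n = p_1^{α_1} p_2^{α_2} ⋯ p_k^{α_k}. Then the number of integers m with 1 < m < n, gcd(m, n) = 1 and gcd(m − 1, n) = 1 for which the loop L_n(m) is strictly non-commutative equals F_n = ∏_{i=1}^{k} (p_i − 3) p_i^{α_i − 1}. -/

import Mathlib

/-- The loop `L_n(m)`: carrier `{e} ∪ {1, …, n}`, modeled as `Option (ZMod n)`
with `none` playing the role of the identity `e` and the nonidentity elements
`{1, …, n}` identified with their residues in `ZMod n`.  For distinct nonidentity
`i, j` the product is `m·j − (m−1)·i (mod n)`. -/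
def lmul (n m : ℕ) : Option (ZMod n) → Option (ZMod n) → Option (ZMod n)
  | none, x => x
  | some i, none => some i
  | some i, some j =>
      if i = j then none
      else some ((m : ZMod n) * j - ((m : ZMod n) - 1) * i)

private lemma isUnit_prod_iff' {M N : Type*} [Monoid M] [Monoid N] {x : M × N} :
    IsUnit x ↔ IsUnit x.1 ∧ IsUnit x.2 := by
  constructor
  · intro h; exact ⟨h.map (MonoidHom.fst M N), h.map (MonoidHom.snd M N)⟩
  · rintro ⟨⟨u, hu⟩, ⟨v, hv⟩⟩
    refine ⟨⟨(u.val, v.val), (u.inv, v.inv), ?_, ?_⟩, ?_⟩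
    · ext <;> simp [u.val_inv, v.val_inv]
    · ext <;> simp [u.inv_val, v.inv_val]
    · ext <;> simp [hu, hv]

/-- The counting function: number of `a` in `ZMod n` with `a`, `a-1`, `2a-1` units. -/
private noncomputable def Ncard (n : ℕ) : ℕ :=
  Nat.card {a : ZMod n // IsUnit a ∧ IsUnit (a - 1) ∧ IsUnit (2 * a - 1)}

private lemma pcond_iff_map {R S : Type*} [CommRing R] [CommRing S] (e : R ≃+* S) (a : R) :
    (IsUnit a ∧ IsUnit (a - 1) ∧ IsUnit (2 * a - 1)) ↔
      (IsUnit (e a) ∧ IsUnit (e a - 1) ∧ IsUnit (2 * e a - 1)) := by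
  have hu : ∀ b : R, IsUnit b ↔ IsUnit (e b) := fun b =>
    ⟨fun hb => hb.map (e : R →+* S), fun hb => by
      simpa using hb.map (e.symm : S →+* R)⟩
  rw [hu a, hu (a - 1), hu (2 * a - 1), map_sub, map_sub, map_one, map_mul, map_ofNat]

private lemma Ncard_one : Ncard 1 = 1 := by
  have h0 : IsUnit (0 : ZMod 1) ∧ IsUnit ((0 : ZMod 1) - 1) ∧ IsUnit (2 * (0 : ZMod 1) - 1) := by
    exact ⟨isUnit_of_subsingleton _, isUnit_of_subsingleton _, isUnit_of_subsingleton _⟩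
  haveI : Unique {a : ZMod 1 // IsUnit a ∧ IsUnit (a - 1) ∧ IsUnit (2 * a - 1)} :=
    ⟨⟨⟨0, h0⟩⟩, fun x => Subtype.ext (Subsingleton.elim _ _)⟩
  exact Nat.card_unique

private lemma Ncard_mul (x y : ℕ) (h : Nat.Coprime x y) : Ncard (x * y) = Ncard x * Ncard y := by
  rw [Ncard, Ncard, Ncard, ← Nat.card_prod]
  apply Nat.card_congr
  have e := ZMod.chineseRemainder h
  refine (Equiv.subtypeEquiv (q := fun z : ZMod x × ZMod y =>
      IsUnit z ∧ IsUnit (z - 1) ∧ IsUnit (2 * z - 1)) e.toEquiv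
      fun a => pcond_iff_map e a).trans
    ((Equiv.subtypeEquivRight fun z => ?_).trans Equiv.subtypeProdEquivProd)
  show (IsUnit z ∧ IsUnit (z - 1) ∧ IsUnit (2 * z - 1)) ↔ _
  rw [isUnit_prod_iff', isUnit_prod_iff' (x := z - 1), isUnit_prod_iff' (x := 2 * z - 1)]
  simp only [Prod.fst_sub, Prod.snd_sub, Prod.fst_mul, Prod.snd_mul, Prod.fst_one, Prod.snd_one,
    Prod.fst_ofNat, Prod.snd_ofNat]
  tauto

private lemma isUnit_zmod_pow_iff {p k : ℕ} (hp : p.Prime) (hk : 0 < k) (a : ZMod (p ^ k)) :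
    IsUnit a ↔ (ZMod.castHom (dvd_pow_self p hk.ne') (ZMod p)) a ≠ 0 := by
  haveI : NeZero (p ^ k) := ⟨pow_ne_zero k hp.ne_zero⟩
  have ha : ((a.val : ℕ) : ZMod (p ^ k)) = a := ZMod.natCast_rightInverse a
  have hmap : (ZMod.castHom (dvd_pow_self p hk.ne') (ZMod p)) a = ((a.val : ℕ) : ZMod p) := by
    conv_lhs => rw [← ha]
    rw [map_natCast]
  have h1 : IsUnit a ↔ Nat.Coprime a.val (p ^ k) := by
    have := ZMod.isUnit_iff_coprime a.val (p ^ k)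
    rwa [ha] at this
  rw [hmap, Ne, ZMod.natCast_eq_zero_iff, h1, Nat.coprime_pow_right_iff hk]
  exact Nat.coprime_comm.trans (hp.coprime_iff_not_dvd)

private lemma Ncard_pp {p k : ℕ} (hp : p.Prime) (hp2 : p ≠ 2) (hk : 0 < k) :
    Ncard (p ^ k) = (p - 3) * p ^ (k - 1) := by
  classical
  haveI : Fact p.Prime := ⟨hp⟩
  haveI : NeZero (p ^ k) := ⟨pow_ne_zero k hp.ne_zero⟩
  set h : ZMod (p ^ k) →+* ZMod p := ZMod.castHom (dvd_pow_self p hk.ne') (ZMod p) with hh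
  have h2 : (2 : ZMod p) ≠ 0 := by
    intro hz
    have : p ∣ 2 := by
      have := (ZMod.natCast_eq_zero_iff 2 p).mp (by exact_mod_cast hz)
      exact this
    exact hp2 ((Nat.prime_dvd_prime_iff_eq hp Nat.prime_two).mp this)
  have hinv : ∀ x : ZMod p, 2 * x = 1 ↔ x = 2⁻¹ := fun x => by
    rw [inv_eq_one_div, eq_div_iff h2, mul_comm]
  -- condition transport
  have hcond : ∀ a : ZMod (p ^ k),
      (IsUnit a ∧ IsUnit (a - 1) ∧ IsUnit (2 * a - 1)) ↔
        (h a ≠ 0 ∧ h a ≠ 1 ∧ h a ≠ (2 : ZMod p)⁻¹) := by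
    intro a
    rw [isUnit_zmod_pow_iff hp hk a, isUnit_zmod_pow_iff hp hk (a - 1),
      isUnit_zmod_pow_iff hp hk (2 * a - 1)]
    simp only [map_sub, map_mul, map_ofNat, map_one]
    constructor
    · rintro ⟨u1, u2, u3⟩
      refine ⟨u1, fun hx => u2 (by rw [hx, sub_self]), fun hx => u3 ?_⟩
      rw [sub_eq_zero, hinv]; exact hx
    · rintro ⟨u1, u2, u3⟩
      refine ⟨u1, fun hx => u2 (by rwa [sub_eq_zero] at hx), fun hx => u3 ?_⟩
      rw [sub_eq_zero] at hx
      exact (hinv _).mp hx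
  -- counting
  rw [Ncard, Nat.card_eq_fintype_card, Fintype.card_subtype]
  have hfilter : (Finset.univ.filter
      fun a : ZMod (p ^ k) => IsUnit a ∧ IsUnit (a - 1) ∧ IsUnit (2 * a - 1)) =
      Finset.univ.filter fun a => (h a ≠ 0 ∧ h a ≠ 1 ∧ h a ≠ (2 : ZMod p)⁻¹) := by
    apply Finset.filter_congr
    intro a _
    exact iff_iff_eq.mp (hcond a) ▸ Iff.rfl
  rw [hfilter]
  -- fibers of h all have cardinality p^(k-1)
  have hfib0 : ∀ b : ZMod p, (Finset.univ.filter fun a : ZMod (p ^ k) => h a = b).card =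
      (Finset.univ.filter fun a : ZMod (p ^ k) => h a = 0).card := by
    intro b
    have hb : ∃ a0 : ZMod (p ^ k), h a0 = b := by
      refine ⟨((b.val : ℕ) : ZMod (p ^ k)), ?_⟩
      rw [map_natCast]
      exact ZMod.natCast_rightInverse b
    obtain ⟨a0, ha0⟩ := hb
    apply Finset.card_bij' (fun a _ => a - a0) (fun c _ => c + a0)
    · intro a ha
      simp only [Finset.mem_filter, Finset.mem_univ, true_and] at ha ⊢
      rw [map_sub, ha, ha0, sub_self]
    · intro c hc
      simp only [Finset.mem_filter, Finset.mem_univ, true_and] at hc ⊢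
      rw [map_add, hc, ha0, zero_add]
    · intro a _; ring
    · intro c _; ring
  have hcardfib : (Finset.univ.filter fun a : ZMod (p ^ k) => h a = 0).card = p ^ (k - 1) := by
    have htot : (Finset.univ : Finset (ZMod (p ^ k))).card =
        ∑ b : ZMod p, (Finset.univ.filter fun a : ZMod (p ^ k) => h a = b).card :=
      Finset.card_eq_sum_card_fiberwise (fun x _ => Finset.mem_univ (h x))
    rw [Finset.card_univ, ZMod.card] at htot
    have hmain : p ^ k = p * (Finset.univ.filter fun a : ZMod (p ^ k) => h a = 0).card :=
      calc p ^ k = ∑ b : ZMod p, (Finset.univ.filter fun a : ZMod (p ^ k) => h a = b).card :=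
            htot
        _ = ∑ _b : ZMod p, (Finset.univ.filter fun a : ZMod (p ^ k) => h a = 0).card :=
            Finset.sum_congr rfl fun b _ => hfib0 b
        _ = Fintype.card (ZMod p) *
              (Finset.univ.filter fun a : ZMod (p ^ k) => h a = 0).card := by
            rw [Finset.sum_const, smul_eq_mul, Finset.card_univ]
        _ = p * (Finset.univ.filter fun a : ZMod (p ^ k) => h a = 0).card := by
            rw [ZMod.card]
    have hpk : p ^ k = p * p ^ (k - 1) := by
      rw [← pow_succ']
      congr 1
      omega
    exact Nat.eq_of_mul_eq_mul_left hp.pos (by rw [← hmain, hpk])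
  -- split by fibers
  have hQ : ∀ b : ZMod p, b ∈ Finset.univ.filter
      (fun b : ZMod p => b ≠ 0 ∧ b ≠ 1 ∧ b ≠ (2 : ZMod p)⁻¹) ↔
      (b ≠ 0 ∧ b ≠ 1 ∧ b ≠ (2 : ZMod p)⁻¹) := by
    intro b; simp
  have hsplit : (Finset.univ.filter
      fun a : ZMod (p ^ k) => (h a ≠ 0 ∧ h a ≠ 1 ∧ h a ≠ (2 : ZMod p)⁻¹)).card =
      ∑ b ∈ Finset.univ.filter (fun b : ZMod p => b ≠ 0 ∧ b ≠ 1 ∧ b ≠ (2 : ZMod p)⁻¹),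
        ((Finset.univ.filter
          fun a : ZMod (p ^ k) => (h a ≠ 0 ∧ h a ≠ 1 ∧ h a ≠ (2 : ZMod p)⁻¹)).filter
            fun a => h a = b).card := by
    apply Finset.card_eq_sum_card_fiberwise
    intro a ha
    simp only [Finset.mem_coe, Finset.mem_filter, Finset.mem_univ, true_and] at ha ⊢
    exact ha
  rw [hsplit]
  have hinner : ∀ b ∈ Finset.univ.filter (fun b : ZMod p => b ≠ 0 ∧ b ≠ 1 ∧ b ≠ (2 : ZMod p)⁻¹),
      ((Finset.univ.filter
        fun a : ZMod (p ^ k) => (h a ≠ 0 ∧ h a ≠ 1 ∧ h a ≠ (2 : ZMod p)⁻¹)).filter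
          fun a => h a = b).card = p ^ (k - 1) := by
    intro b hb
    have : ((Finset.univ.filter
        fun a : ZMod (p ^ k) => (h a ≠ 0 ∧ h a ≠ 1 ∧ h a ≠ (2 : ZMod p)⁻¹)).filter
          fun a => h a = b) = Finset.univ.filter fun a : ZMod (p ^ k) => h a = b := by
      obtain ⟨hb1, hb2, hb3⟩ := (hQ b).mp hb
      ext a
      simp only [Finset.mem_filter, Finset.mem_univ, true_and]
      constructor
      · rintro ⟨_, ha⟩; exact ha
      · intro ha; exact ⟨by rw [ha]; exact ⟨hb1, hb2, hb3⟩, ha⟩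
    rw [this, hfib0 b, hcardfib]
  rw [Finset.sum_congr rfl hinner, Finset.sum_const, smul_eq_mul]
  congr 1
  -- count of good residues mod p is p - 3
  have h01 : (0 : ZMod p) ≠ 1 := zero_ne_one
  have h0i : (0 : ZMod p) ≠ (2 : ZMod p)⁻¹ := fun hx => (inv_ne_zero h2) hx.symm
  have h1i : (1 : ZMod p) ≠ (2 : ZMod p)⁻¹ := by
    intro hx
    have hm : (2 : ZMod p) * (2 : ZMod p)⁻¹ = 1 := mul_inv_cancel₀ h2
    rw [← hx, mul_one] at hm
    exact one_ne_zero (α := ZMod p) (by linear_combination hm)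
  have hset : Finset.univ.filter (fun b : ZMod p => b ≠ 0 ∧ b ≠ 1 ∧ b ≠ (2 : ZMod p)⁻¹) =
      Finset.univ \ {0, 1, (2 : ZMod p)⁻¹} := by
    ext b
    simp only [Finset.mem_filter, Finset.mem_univ, true_and, Finset.mem_sdiff,
      Finset.mem_insert, Finset.mem_singleton]
    tauto
  rw [hset, Finset.card_sdiff_of_subset (Finset.subset_univ _), Finset.card_univ, ZMod.card]
  congr 1
  rw [Finset.card_insert_of_notMem (by simp [h01, h0i]),
    Finset.card_insert_of_notMem (by simp [h1i]), Finset.card_singleton]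

private lemma strict_iff (n : ℕ) (hn : 3 < n) (m : ℕ) :
    (∀ x y : Option (ZMod n), x ≠ none → y ≠ none → x ≠ y →
        lmul n m x y ≠ lmul n m y x) ↔ IsUnit (2 * (m : ZMod n) - 1) := by
  haveI : NeZero n := ⟨by omega⟩
  constructor
  · intro H
    have key : ∀ d : ZMod n, (2 * (m : ZMod n) - 1) * d = 0 → d = 0 := by
      intro d hd
      by_contra hd0
      have hne : (0 : ZMod n) ≠ d := fun hx => hd0 hx.symm
      have := H (some 0) (some d) (by simp) (by simp) (by simpa using hne)
      apply this
      show lmul n m (some 0) (some d) = lmul n m (some d) (some 0)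
      rw [show lmul n m (some 0) (some d) =
        some ((m : ZMod n) * d - ((m : ZMod n) - 1) * 0) from if_neg hne,
        show lmul n m (some d) (some 0) =
        some ((m : ZMod n) * 0 - ((m : ZMod n) - 1) * d) from if_neg (Ne.symm hne)]
      congr 1
      linear_combination hd
    have hinj : Function.Injective (fun x : ZMod n => (2 * (m : ZMod n) - 1) * x) := by
      intro x y hxy
      have hxy' : (2 * (m : ZMod n) - 1) * (x - y) = 0 := by
        simp only at hxy
        linear_combination hxy
      exact sub_eq_zero.mp (key _ hxy')
    have hsurj : Function.Surjective (fun x : ZMod n => (2 * (m : ZMod n) - 1) * x) :=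
      Finite.surjective_of_injective hinj
    obtain ⟨c, hc⟩ := hsurj 1
    exact IsUnit.of_mul_eq_one c hc
  · rintro hu x y hx hy hxy
    obtain ⟨i, rfl⟩ := Option.ne_none_iff_exists'.mp hx
    obtain ⟨j, rfl⟩ := Option.ne_none_iff_exists'.mp hy
    have hij : i ≠ j := fun hEq => hxy (by rw [hEq])
    rw [show lmul n m (some i) (some j) =
      some ((m : ZMod n) * j - ((m : ZMod n) - 1) * i) from if_neg hij,
      show lmul n m (some j) (some i) =
      some ((m : ZMod n) * i - ((m : ZMod n) - 1) * j) from if_neg (Ne.symm hij)]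
    intro hEq
    have heq2 := Option.some.inj hEq
    have h0 : (2 * (m : ZMod n) - 1) * (j - i) = (2 * (m : ZMod n) - 1) * 0 := by
      rw [mul_zero]; linear_combination heq2
    exact hij (sub_eq_zero.mp (hu.mul_left_cancel h0)).symm

theorem stmt2 (n : ℕ) (hn : 3 < n) (hodd : Odd n) :
    Nat.card {m : ℕ // 1 < m ∧ m < n ∧ Nat.gcd m n = 1 ∧ Nat.gcd (m - 1) n = 1 ∧
      ∀ x y : Option (ZMod n), x ≠ none → y ≠ none → x ≠ y →
        lmul n m x y ≠ lmul n m y x} =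
      ∏ p ∈ n.primeFactors, (p - 3) * p ^ (n.factorization p - 1) := by
  haveI : NeZero n := ⟨by omega⟩
  haveI : Fact (1 < n) := ⟨by omega⟩
  have hcard : Nat.card {m : ℕ // 1 < m ∧ m < n ∧ Nat.gcd m n = 1 ∧ Nat.gcd (m - 1) n = 1 ∧
      ∀ x y : Option (ZMod n), x ≠ none → y ≠ none → x ≠ y →
        lmul n m x y ≠ lmul n m y x} = Ncard n := by
    apply Nat.card_congr
    refine Equiv.ofBijective (fun x => ⟨((x.1 : ℕ) : ZMod n), ?_, ?_, ?_⟩) ⟨?_, ?_⟩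
    · exact (ZMod.isUnit_iff_coprime x.1 n).mpr x.2.2.2.1
    · have hc : ((x.1 - 1 : ℕ) : ZMod n) = (x.1 : ℕ) - 1 := by
        rw [Nat.cast_sub (by omega : 1 ≤ x.1), Nat.cast_one]
      rw [← hc]
      exact (ZMod.isUnit_iff_coprime _ n).mpr x.2.2.2.2.1
    · exact (strict_iff n hn x.1).mp x.2.2.2.2.2
    · rintro ⟨m1, hm1⟩ ⟨m2, hm2⟩ hEq
      have hc : ((m1 : ℕ) : ZMod n) = ((m2 : ℕ) : ZMod n) := congrArg Subtype.val hEq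
      apply Subtype.ext
      show m1 = m2
      calc m1 = ((m1 : ZMod n)).val := (ZMod.val_cast_of_lt hm1.2.1).symm
        _ = ((m2 : ZMod n)).val := by rw [hc]
        _ = m2 := ZMod.val_cast_of_lt hm2.2.1
    · rintro ⟨a, ha1, ha2, ha3⟩
      have hval : ((a.val : ℕ) : ZMod n) = a := ZMod.natCast_rightInverse a
      have hvlt : a.val < n := ZMod.val_lt a
      have hv0 : a.val ≠ 0 := by
        intro hz
        have : a = 0 := (ZMod.val_eq_zero a).mp hz
        rw [this] at ha1
        exact zero_ne_one (isUnit_zero_iff.mp ha1)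
      have hv1 : a.val ≠ 1 := by
        intro hz
        have : a = 1 := by rw [← hval, hz, Nat.cast_one]
        rw [this, sub_self] at ha2
        exact zero_ne_one (isUnit_zero_iff.mp ha2)
      refine ⟨⟨a.val, by omega, hvlt, ?_, ?_, ?_⟩, Subtype.ext hval⟩
      · exact (ZMod.isUnit_iff_coprime a.val n).mp (by rw [hval]; exact ha1)
      · apply (ZMod.isUnit_iff_coprime (a.val - 1) n).mp
        rw [Nat.cast_sub (by omega : 1 ≤ a.val), Nat.cast_one, hval]
        exact ha2
      · apply (strict_iff n hn a.val).mpr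
        rw [hval]
        exact ha3
  rw [hcard]
  rw [Nat.multiplicative_factorization Ncard Ncard_mul Ncard_one (show n ≠ 0 by omega)]
  simp only [Finsupp.prod]
  rw [Nat.support_factorization]
  apply Finset.prod_congr rfl
  intro p hp
  have hpp : p.Prime := Nat.prime_of_mem_primeFactors hp
  have hdvd : p ∣ n := Nat.dvd_of_mem_primeFactors hp
  have hp2 : p ≠ 2 := by
    intro h2
    rw [h2] at hdvd
    rw [Nat.odd_iff] at hodd
    omega
  have hk : 0 < n.factorization p := hpp.factorization_pos_of_dvd (by omega) hdvd
  exact Ncard_pp hpp hp2 hk
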